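/- If a graph G is f-removable (i.e., all vertices can be deleted by legal DelSave operations), then G admits an orientation in which every vertex v has out-degree strictly less than f(v). -/

import Mathlib

/-- An orientation of a simple graph: each edge gets exactly one direction. -/
structure GraphOrientation {V : Type*} (G : SimpleGraph V) where
  dir : V → V → Prop
  consistent : ∀ u v, G.Adj u v ↔ (dir u v ∨ dir v u)
  antisymm : ∀ u v, dir u v → ¬ dir v u

/-- The out-degree of a vertex in an orientation. -/
noncomputable def outDeg {V : Type*} {G : SimpleGraph V} (o : GraphOrientation G) (v : V) : ℕ :=
  Nat.card {u : V // o.dir v u}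

/-- The in-degree of a vertex in an orientation. -/
noncomputable def inDeg {V : Type*} {G : SimpleGraph V} (o : GraphOrientation G) (v : V) : ℕ :=
  Nat.card {u : V // o.dir u v}

open scoped Classical in
/-- `Removable G S f`: all vertices of `S` (the remaining vertices of `G`) can be deleted
by legal `DelSave` operations. Deleting `u` with save-set `W ⊆ N(u)` is legal if
`f u > ∑_{w ∈ W} f w` and afterwards every remaining vertex keeps a positive value;
each deleted vertex decreases `f` by one on its unsaved neighbors. -/
inductive Removable {V : Type*} [DecidableEq V] (G : SimpleGraph V) :
    Finset V → (V → ℕ) → Prop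
  | empty (f : V → ℕ) : Removable G ∅ f
  | step (S : Finset V) (f : V → ℕ) (u : V) (W : Finset V)
      (hu : u ∈ S)
      (hW : ∀ w ∈ W, w ∈ S.erase u ∧ G.Adj u w)
      (hlegal : ∑ w ∈ W, f w < f u)
      (hpos : ∀ v ∈ S.erase u, 1 ≤ (if G.Adj u v ∧ v ∉ W then f v - 1 else f v))
      (hrec : Removable G (S.erase u) (fun v => if G.Adj u v ∧ v ∉ W then f v - 1 else f v)) :
      Removable G S f

lemma removable_key {V : Type*} [Fintype V] [DecidableEq V] {G : SimpleGraph V}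
    {S : Finset V} {f : V → ℕ} (h : Removable G S f) :
    ∃ dir : V → V → Prop,
      (∀ a b, dir a b → a ∈ S ∧ b ∈ S ∧ G.Adj a b) ∧
      (∀ a b, a ∈ S → b ∈ S → G.Adj a b → dir a b ∨ dir b a) ∧
      (∀ a b, dir a b → ¬ dir b a) ∧
      (∀ v ∈ S, Set.ncard {b | dir v b} < f v) := by
  induction h with
  | empty f =>
      exact ⟨fun _ _ => False, by simp, by simp, by simp, by simp⟩
  | step S f u W hu hW hlegal hpos hrec ih =>
      obtain ⟨d, hsupp, htot, hanti, hcard⟩ := ih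
      have hdu : ∀ b, ¬ d u b := fun b hb =>
        Finset.notMem_erase u S ((hsupp u b hb).1)
      have hdu' : ∀ b, ¬ d b u := fun b hb =>
        Finset.notMem_erase u S ((hsupp b u hb).2.1)
      have hWu : u ∉ W := fun hw => Finset.notMem_erase u S ((hW u hw).1)
      refine ⟨fun a b => d a b ∨ (a = u ∧ b ∈ W) ∨
        (b = u ∧ a ∈ S.erase u ∧ G.Adj u a ∧ a ∉ W), ?_, ?_, ?_, ?_⟩
      · rintro a b (hab | ⟨rfl, hb⟩ | ⟨rfl, ha, hadj, _⟩)
        · obtain ⟨h1, h2, h3⟩ := hsupp a b hab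
          exact ⟨Finset.mem_of_mem_erase h1, Finset.mem_of_mem_erase h2, h3⟩
        · obtain ⟨h1, h2⟩ := hW b hb
          exact ⟨hu, Finset.mem_of_mem_erase h1, h2⟩
        · exact ⟨Finset.mem_of_mem_erase ha, hu, hadj.symm⟩
      · intro a b ha hb hadj
        by_cases hau : a = u
        · subst hau
          have hbne : b ≠ a := fun e => G.irrefl (e ▸ hadj)
          by_cases hbW : b ∈ W
          · exact Or.inl (Or.inr (Or.inl ⟨rfl, hbW⟩))
          · exact Or.inr (Or.inr (Or.inr ⟨rfl, Finset.mem_erase.mpr ⟨hbne, hb⟩, hadj, hbW⟩))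
        · by_cases hbu : b = u
          · subst hbu
            by_cases haW : a ∈ W
            · exact Or.inr (Or.inr (Or.inl ⟨rfl, haW⟩))
            · exact Or.inl (Or.inr (Or.inr ⟨rfl, Finset.mem_erase.mpr ⟨hau, ha⟩,
                hadj.symm, haW⟩))
          · rcases htot a b (Finset.mem_erase.mpr ⟨hau, ha⟩) (Finset.mem_erase.mpr ⟨hbu, hb⟩)
              hadj with h | h
            · exact Or.inl (Or.inl h)
            · exact Or.inr (Or.inl h)
      · rintro a b h1 h2
        rcases h1 with hab | ⟨rfl, hbW⟩ | ⟨rfl, haS, hadj, haW⟩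
        · rcases h2 with hba | ⟨rfl, haW⟩ | ⟨rfl, hbS, _, _⟩
          · exact hanti a b hab hba
          · exact hdu' a hab
          · exact hdu b hab
        · rcases h2 with hba | ⟨rfl, haW⟩ | ⟨_, hbS, _, hbW'⟩
          · exact hdu' b hba
          · exact hWu haW
          · exact hbW' hbW
        · rcases h2 with hba | ⟨_, haW'⟩ | ⟨rfl, huS, _, _⟩
          · exact hdu a hba
          · exact haW haW'
          · exact Finset.notMem_erase a S huS
      · intro v hv
        by_cases hvu : v = u
        · subst hvu
          have hset : {b | d v b ∨ (v = v ∧ b ∈ W) ∨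
              (b = v ∧ v ∈ S.erase v ∧ G.Adj v v ∧ v ∉ W)} = (W : Set V) := by
            ext b
            simp [hdu b, Finset.notMem_erase v S]
          have hfW : ∀ w ∈ W, 1 ≤ f w := by
            intro w hw
            have := hpos w (hW w hw).1
            simpa [hw] using this
          have hcW : W.card ≤ ∑ w ∈ W, f w := by
            calc W.card = ∑ _w ∈ W, 1 := by rw [Finset.card_eq_sum_ones]
            _ ≤ ∑ w ∈ W, f w := Finset.sum_le_sum hfW
          rw [hset, Set.ncard_coe_finset]
          exact lt_of_le_of_lt hcW hlegal
        · have hv' : v ∈ S.erase u := Finset.mem_erase.mpr ⟨hvu, hv⟩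
          have hcv := hcard v hv'
          have hpv := hpos v hv'
          by_cases hc : G.Adj u v ∧ v ∉ W
          · have hset : {b | d v b ∨ (v = u ∧ b ∈ W) ∨
                (b = u ∧ v ∈ S.erase u ∧ G.Adj u v ∧ v ∉ W)} = insert u {b | d v b} := by
              ext b
              constructor
              · rintro (hb | ⟨hvu', _⟩ | ⟨rfl, _⟩)
                · exact Set.mem_insert_of_mem _ hb
                · exact absurd hvu' hvu
                · exact Set.mem_insert _ _
              · rintro (rfl | hb)
                · exact Or.inr (Or.inr ⟨rfl, hv', hc.1, hc.2⟩)
                · exact Or.inl hb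
            have hnm : u ∉ {b | d v b} := hdu' v
            rw [hset, Set.ncard_insert_of_notMem hnm (Set.toFinite _)]
            simp only [if_pos hc] at hcv hpv
            omega
          · have hset : {b | d v b ∨ (v = u ∧ b ∈ W) ∨
                (b = u ∧ v ∈ S.erase u ∧ G.Adj u v ∧ v ∉ W)} = {b | d v b} := by
              ext b
              constructor
              · rintro (hb | ⟨hvu', _⟩ | ⟨rfl, _, h3, h4⟩)
                · exact hb
                · exact absurd hvu' hvu
                · exact absurd ⟨h3, h4⟩ hc
              · exact fun hb => Or.inl hb
            rw [hset]
            simp only [if_neg hc] at hcv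
            exact hcv

/-- If `G` is `f`-removable, then `G` has an orientation in which every
vertex `v` has out-degree strictly less than `f v`. -/
theorem statement7 {V : Type*} [Fintype V] [DecidableEq V] (G : SimpleGraph V) (f : V → ℕ)
    (h : Removable G Finset.univ f) :
    ∃ o : GraphOrientation G, ∀ v, outDeg o v < f v := by
  obtain ⟨dir, hsupp, htot, hanti, hcard⟩ := removable_key h
  refine ⟨⟨dir, ?_, hanti⟩, ?_⟩
  · intro a b
    constructor
    · intro hadj
      exact htot a b (Finset.mem_univ a) (Finset.mem_univ b) hadj
    · rintro (hd | hd)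
      · exact (hsupp a b hd).2.2
      · exact (hsupp b a hd).2.2.symm
  · intro v
    have := hcard v (Finset.mem_univ v)
    simpa [outDeg, Set.ncard_eq_toFinset_card', ← Nat.card_coe_set_eq, Set.coe_setOf] using this
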